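/- Let G be a residually finite group and H a subgroup of finite index. Then there is a finite set Y and an H-equivariant homeomorphism Y × H̄ → Ḡ, where H acts trivially on Y, by left translation on its profinite completion H̄, and by left translation on Ḡ. -/

import Mathlib

/-- The (index) family of finite-index normal subgroups of `G`. -/
def FinIndexNormal (G : Type*) [Group G] : Type _ :=
  {N : Subgroup G // N.Normal ∧ N.index ≠ 0}

instance {G : Type*} [Group G] (N : FinIndexNormal G) : N.1.Normal := N.2.1

/-- Each finite quotient carries the discrete topology. -/
instance {G : Type*} [Group G] (N : FinIndexNormal G) : TopologicalSpace (G ⧸ N.1) := ⊥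

/-- The connecting map `G ⧸ N → G ⧸ M` for `N ≤ M`. -/
def transMap {G : Type*} [Group G] {N M : FinIndexNormal G} (h : N.1 ≤ M.1) :
    G ⧸ N.1 →* G ⧸ M.1 :=
  QuotientGroup.map N.1 M.1 (MonoidHom.id G) (fun _ hg => h hg)

/-- The profinite completion of `G` as the subgroup of compatible families in
`∏_N G ⧸ N` over all finite-index normal subgroups `N` of `G`. -/
def profCompSubgroup (G : Type*) [Group G] : Subgroup (∀ N : FinIndexNormal G, G ⧸ N.1) where
  carrier := {x | ∀ (N M : FinIndexNormal G) (h : N.1 ≤ M.1), transMap h (x N) = x M}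
  mul_mem' := by
    intro a b ha hb N M h
    simp only [Pi.mul_apply, map_mul, ha N M h, hb N M h]
  one_mem' := by
    intro N M h
    simp only [Pi.one_apply, map_one]
  inv_mem' := by
    intro a ha N M h
    simp only [Pi.inv_apply, map_inv, ha N M h]

/-- The profinite completion `Ḡ` of `G`. -/
def ProfComp (G : Type*) [Group G] : Type _ := ↥(profCompSubgroup G)

instance {G : Type*} [Group G] : Group (ProfComp G) :=
  inferInstanceAs (Group ↥(profCompSubgroup G))

instance {G : Type*} [Group G] : TopologicalSpace (ProfComp G) :=
  inferInstanceAs (TopologicalSpace ↥(profCompSubgroup G))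

/-- The canonical map `ι : G → Ḡ`, `g ↦ (gN)_N`, as a group homomorphism. -/
def iotaHom (G : Type*) [Group G] : G →* ProfComp G where
  toFun g := ⟨fun N => QuotientGroup.mk g, fun _ _ _ => rfl⟩
  map_one' := Subtype.ext (funext fun _ => rfl)
  map_mul' := fun _ _ => Subtype.ext (funext fun _ => rfl)

/-- `G` is residually finite: every non-identity element survives in some finite quotient. -/
def ResiduallyFinite (G : Type*) [Group G] : Prop :=
  ∀ g : G, g ≠ 1 → ∃ N : Subgroup G, N.Normal ∧ N.index ≠ 0 ∧ g ∉ N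

namespace ProfCompPf

open Subgroup QuotientGroup

variable {G : Type*} [Group G]

theorem eq_mk {α : Type*} [Group α] {s : Subgroup α} (q : α ⧸ s) :
    ∃ a, q = QuotientGroup.mk a := ⟨Quotient.out q, (QuotientGroup.out_eq' q).symm⟩

theorem finite_quot (N : FinIndexNormal G) : Finite (G ⧸ N.1) :=
  Nat.finite_of_card_ne_zero (by rw [← N.1.index_eq_card]; exact N.2.2)

instance (N : FinIndexNormal G) : Finite (G ⧸ N.1) := finite_quot N

instance (N : FinIndexNormal G) : DiscreteTopology (G ⧸ N.1) := ⟨rfl⟩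

theorem isClosed_profComp (G : Type*) [Group G] :
    IsClosed ((profCompSubgroup G : Set (∀ N : FinIndexNormal G, G ⧸ N.1))) := by
  have h : (profCompSubgroup G : Set (∀ N : FinIndexNormal G, G ⧸ N.1)) =
      ⋂ (N : FinIndexNormal G) (M : FinIndexNormal G) (h : N.1 ≤ M.1),
        {x : ∀ N : FinIndexNormal G, G ⧸ N.1 | transMap h (x N) = x M} := by
    ext x
    simp only [Set.mem_iInter, Set.mem_setOf_eq, SetLike.mem_coe]
    rfl
  rw [h]
  exact isClosed_iInter fun N => isClosed_iInter fun M => isClosed_iInter fun hle =>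
    isClosed_eq (continuous_of_discreteTopology.comp (continuous_apply N)) (continuous_apply M)

instance : CompactSpace (ProfComp G) :=
  isCompact_iff_compactSpace.mp (isClosed_profComp G).isCompact

instance : T2Space (ProfComp G) :=
  inferInstanceAs (T2Space ↥(profCompSubgroup G))

variable (H : Subgroup G)

/-- The set of right cosets of `H` in `G`. -/
abbrev Qr := Quotient (QuotientGroup.rightRel H)

/-- The right-coset class of `g`. -/
def cls (g : G) : Qr H := Quotient.mk _ g

theorem cls_eq_of_mem {g₁ g₂ : G} (h : g₂ * g₁⁻¹ ∈ H) : cls H g₁ = cls H g₂ :=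
  Quotient.sound (QuotientGroup.rightRel_apply.mpr h)

theorem out_cls_mem (g : G) : g * (cls H g).out⁻¹ ∈ H :=
  QuotientGroup.rightRel_apply.mp
    (Quotient.exact ((cls H g).out_eq : Quotient.mk _ (cls H g).out = Quotient.mk _ g))

/-- The `H`-part of `g` relative to the chosen right-coset representatives. -/
noncomputable def toH (g : G) : ↥H := ⟨g * (cls H g).out⁻¹, out_cls_mem H g⟩

theorem toH_spec (g : G) : (toH H g : G) * (cls H g).out = g := by
  simp [toH]

variable (hH : H.index ≠ 0)

/-- The normal core of `H` as a finite-index normal subgroup. -/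
def Cfin : FinIndexNormal G :=
  ⟨H.normalCore, H.normalCore_normal, by
    haveI : H.FiniteIndex := ⟨hH⟩
    exact Subgroup.FiniteIndex.index_ne_zero⟩

/-- `N ⊓ normalCore H`. -/
def Kf (N : FinIndexNormal G) : FinIndexNormal G :=
  ⟨N.1 ⊓ H.normalCore, inferInstance, Subgroup.index_inf_ne_zero N.2.2 (Cfin H hH).2.2⟩

theorem Kf_le_left (N : FinIndexNormal G) : (Kf H hH N).1 ≤ N.1 := inf_le_left

theorem Kf_le_core (N : FinIndexNormal G) : (Kf H hH N).1 ≤ H.normalCore := inf_le_right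

theorem Kf_le_H (N : FinIndexNormal G) : (Kf H hH N).1 ≤ H :=
  (Kf_le_core H hH N).trans H.normalCore_le

theorem Kf_mono {N M : FinIndexNormal G} (h : N.1 ≤ M.1) :
    (Kf H hH N).1 ≤ (Kf H hH M).1 := inf_le_inf h le_rfl

theorem index_subgroupOf_ne_zero {K : Subgroup G} (hKH : K ≤ H) (hK : K.index ≠ 0) :
    (K.subgroupOf H).index ≠ 0 := by
  intro h0
  apply hK
  rw [← Subgroup.relIndex_mul_index hKH]
  show (K.subgroupOf H).index * H.index = 0
  rw [h0, zero_mul]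

/-- `(N ⊓ normalCore H)` viewed inside `H`. -/
def KHf (N : FinIndexNormal G) : FinIndexNormal ↥H :=
  ⟨(Kf H hH N).1.subgroupOf H, Subgroup.Normal.subgroupOf inferInstance H,
    index_subgroupOf_ne_zero H (Kf_le_H H hH N) (Kf H hH N).2.2⟩

theorem KHf_mono {N M : FinIndexNormal G} (h : N.1 ≤ M.1) :
    (KHf H hH N).1 ≤ (KHf H hH M).1 :=
  Subgroup.comap_mono (Kf_mono H hH h)

/-- A finite-index normal subgroup of `G` contained in `H` refining a given
finite-index normal subgroup `M` of `H`. -/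
def Lf (M : FinIndexNormal ↥H) : FinIndexNormal G :=
  ⟨(M.1.map H.subtype).normalCore ⊓ H.normalCore, inferInstance, by
    haveI : (M.1.map H.subtype).FiniteIndex :=
      ⟨by rw [Subgroup.index_map_subtype]; exact mul_ne_zero M.2.2 hH⟩
    exact Subgroup.index_inf_ne_zero Subgroup.FiniteIndex.index_ne_zero (Cfin H hH).2.2⟩

theorem Lf_le_core (M : FinIndexNormal ↥H) : (Lf H hH M).1 ≤ H.normalCore := inf_le_right

theorem Lf_le_H (M : FinIndexNormal ↥H) : (Lf H hH M).1 ≤ H :=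
  (Lf_le_core H hH M).trans H.normalCore_le

theorem Lf_subgroupOf_le (M : FinIndexNormal ↥H) : (Lf H hH M).1.subgroupOf H ≤ M.1 := by
  have h1 : (Lf H hH M).1 ≤ M.1.map H.subtype :=
    inf_le_left.trans (Subgroup.normalCore_le _)
  calc (Lf H hH M).1.subgroupOf H ≤ (M.1.map H.subtype).subgroupOf H := Subgroup.comap_mono h1
    _ = M.1 := Subgroup.comap_map_eq_self_of_injective H.subtype_injective M.1

theorem Lf_mono {M₁ M₂ : FinIndexNormal ↥H} (h : M₁.1 ≤ M₂.1) :
    (Lf H hH M₁).1 ≤ (Lf H hH M₂).1 :=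
  inf_le_inf (Subgroup.normalCore_mono (Subgroup.map_mono h)) le_rfl

/-- The basic map `H ⧸ (K_N ∩ H) → G ⧸ N`, `h ↦ h ⬝ out y`. -/
noncomputable def thetaCore (y : Qr H) (N : FinIndexNormal G) : ↥H ⧸ (KHf H hH N).1 → G ⧸ N.1 :=
  Quotient.lift (fun h : ↥H => (QuotientGroup.mk ((h : G) * y.out) : G ⧸ N.1))
    (by
      intro a b hab
      have hab' : (a : G)⁻¹ * (b : G) ∈ (Kf H hH N).1 := by
        have h1 := Subgroup.mem_subgroupOf.mp (QuotientGroup.leftRel_apply.mp hab)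
        push_cast at h1
        exact h1
      have h2 : y.out⁻¹ * ((a : G)⁻¹ * b) * (y.out⁻¹)⁻¹ ∈ (Kf H hH N).1 :=
        Subgroup.Normal.conj_mem inferInstance _ hab' y.out⁻¹
      apply QuotientGroup.eq.mpr
      have key : ((a : G) * y.out)⁻¹ * ((b : G) * y.out)
          = y.out⁻¹ * ((a : G)⁻¹ * b) * (y.out⁻¹)⁻¹ := by group
      rw [key]
      exact Kf_le_left H hH N h2)

theorem thetaCore_mk (y : Qr H) (N : FinIndexNormal G) (a : ↥H) :
    thetaCore H hH y N (QuotientGroup.mk a) = QuotientGroup.mk ((a : G) * y.out) := rfl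

/-- The `N`-component of the map `θ`. -/
noncomputable def thetaAux (y : Qr H) (x : ProfComp ↥H) (N : FinIndexNormal G) : G ⧸ N.1 :=
  thetaCore H hH y N (x.1 (KHf H hH N))

theorem thetaAux_mk (y : Qr H) (x : ProfComp ↥H) (N : FinIndexNormal G) (a : ↥H)
    (ha : x.1 (KHf H hH N) = QuotientGroup.mk a) :
    thetaAux H hH y x N = QuotientGroup.mk ((a : G) * y.out) := by
  rw [thetaAux, ha, thetaCore_mk]

theorem transMap_mk {N M : FinIndexNormal G} (h : N.1 ≤ M.1) (g : G) :
    transMap h (QuotientGroup.mk g) = QuotientGroup.mk g := rfl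

/-- The map `θ : Qr × H̄ → Ḡ`. -/
noncomputable def thetaF (y : Qr H) (x : ProfComp ↥H) : ProfComp G :=
  ⟨fun N => thetaAux H hH y x N, by
    intro N M hNM
    obtain ⟨a, ha⟩ := ProfCompPf.eq_mk (x.1 (KHf H hH N))
    have ha' : x.1 (KHf H hH M) = QuotientGroup.mk a := by
      rw [← x.2 _ _ (KHf_mono H hH hNM), ha]
      rfl
    show transMap hNM (thetaAux H hH y x N) = thetaAux H hH y x M
    rw [thetaAux_mk H hH y x N a ha, thetaAux_mk H hH y x M a ha']
    rfl⟩

theorem thetaF_equivariant (h : ↥H) (y : Qr H) (x : ProfComp ↥H) :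
    thetaF H hH y (iotaHom ↥H h * x) = iotaHom G (h : G) * thetaF H hH y x := by
  apply Subtype.ext
  funext N
  obtain ⟨a, ha⟩ := ProfCompPf.eq_mk (x.1 (KHf H hH N))
  have ha' : (iotaHom ↥H h * x).1 (KHf H hH N) = QuotientGroup.mk (h * a) := by
    show (QuotientGroup.mk h : ↥H ⧸ (KHf H hH N).1) * x.1 (KHf H hH N) = _
    rw [ha]
    rfl
  show thetaAux H hH y (iotaHom ↥H h * x) N
      = (QuotientGroup.mk ((h : G)) : G ⧸ N.1) * thetaAux H hH y x N
  rw [thetaAux_mk H hH y _ N (h * a) ha', thetaAux_mk H hH y x N a ha]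
  show _ = QuotientGroup.mk ((h : G) * ((a : G) * y.out))
  congr 1
  push_cast
  group

theorem thetaF_injective :
    Function.Injective (fun p : Qr H × ProfComp ↥H => thetaF H hH p.1 p.2) := by
  rintro ⟨y₁, x₁⟩ ⟨y₂, x₂⟩ hE
  have hcomp : ∀ N, thetaAux H hH y₁ x₁ N = thetaAux H hH y₂ x₂ N := fun N =>
    congrFun (congrArg Subtype.val hE) N
  obtain ⟨a₁, ha₁⟩ := ProfCompPf.eq_mk (x₁.1 (KHf H hH (Cfin H hH)))
  obtain ⟨a₂, ha₂⟩ := ProfCompPf.eq_mk (x₂.1 (KHf H hH (Cfin H hH)))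
  have h1 := hcomp (Cfin H hH)
  rw [thetaAux_mk H hH y₁ x₁ _ a₁ ha₁, thetaAux_mk H hH y₂ x₂ _ a₂ ha₂] at h1
  have hc : ((a₁ : G) * y₁.out)⁻¹ * ((a₂ : G) * y₂.out) ∈ H.normalCore :=
    QuotientGroup.eq.mp h1
  have hy : y₁ = y₂ := by
    have hconj : y₁.out * (((a₁ : G) * y₁.out)⁻¹ * ((a₂ : G) * y₂.out)) * y₁.out⁻¹
        ∈ H.normalCore := Subgroup.Normal.conj_mem inferInstance _ hc y₁.out
    have hmem : y₂.out * y₁.out⁻¹ ∈ H := by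
      have key : y₂.out * y₁.out⁻¹ = ((a₂ : G)⁻¹ * (a₁ : G)) *
          (y₁.out * (((a₁ : G) * y₁.out)⁻¹ * ((a₂ : G) * y₂.out)) * y₁.out⁻¹) := by group
      rw [key]
      exact mul_mem (mul_mem (inv_mem a₂.2) a₁.2) (H.normalCore_le hconj)
    rw [← Quotient.out_eq y₁, ← Quotient.out_eq y₂]
    exact Quotient.sound (QuotientGroup.rightRel_apply.mpr hmem)
  subst hy
  have hx : x₁ = x₂ := by
    apply Subtype.ext
    funext M
    obtain ⟨b₁, hb₁⟩ := ProfCompPf.eq_mk (x₁.1 (KHf H hH (Lf H hH M)))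
    obtain ⟨b₂, hb₂⟩ := ProfCompPf.eq_mk (x₂.1 (KHf H hH (Lf H hH M)))
    have h2 := hcomp (Lf H hH M)
    rw [thetaAux_mk H hH y₁ x₁ _ b₁ hb₁, thetaAux_mk H hH y₁ x₂ _ b₂ hb₂] at h2
    have hm : ((b₁ : G) * y₁.out)⁻¹ * ((b₂ : G) * y₁.out) ∈ (Lf H hH M).1 :=
      QuotientGroup.eq.mp h2
    have hG0 : (b₁ : G)⁻¹ * (b₂ : G) ∈ (Lf H hH M).1 := by
      have key : (b₁ : G)⁻¹ * (b₂ : G)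
          = y₁.out * (((b₁ : G) * y₁.out)⁻¹ * ((b₂ : G) * y₁.out)) * y₁.out⁻¹ := by group
      rw [key]
      exact Subgroup.Normal.conj_mem inferInstance _ hm y₁.out
    have hm' : b₁⁻¹ * b₂ ∈ (KHf H hH (Lf H hH M)).1 := by
      refine Subgroup.mem_subgroupOf.mpr (Subgroup.mem_inf.mpr ⟨?_, ?_⟩)
      · push_cast
        exact hG0
      · push_cast
        exact Lf_le_core H hH M hG0
    have hq : x₁.1 (KHf H hH (Lf H hH M)) = x₂.1 (KHf H hH (Lf H hH M)) := by
      rw [hb₁, hb₂]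
      exact QuotientGroup.eq.mpr hm'
    have hle : (KHf H hH (Lf H hH M)).1 ≤ M.1 :=
      le_trans (Subgroup.comap_mono inf_le_left) (Lf_subgroupOf_le H hH M)
    rw [← x₁.2 _ _ hle, ← x₂.2 _ _ hle, hq]
  rw [hx]

/-- The component maps of the inverse. -/
noncomputable def psiAux (M : FinIndexNormal ↥H) : G ⧸ (Lf H hH M).1 → ↥H ⧸ M.1 :=
  Quotient.lift (fun g : G => (QuotientGroup.mk (toH H g) : ↥H ⧸ M.1))
    (by
      intro g₁ g₂ hg
      have hg' : g₁⁻¹ * g₂ ∈ (Lf H hH M).1 := QuotientGroup.leftRel_apply.mp hg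
      have hcls : cls H g₁ = cls H g₂ := by
        apply cls_eq_of_mem
        have h2 : g₁ * (g₁⁻¹ * g₂) * g₁⁻¹ ∈ (Lf H hH M).1 :=
          Subgroup.Normal.conj_mem inferInstance _ hg' g₁
        rw [show g₁ * (g₁⁻¹ * g₂) * g₁⁻¹ = g₂ * g₁⁻¹ by group] at h2
        exact Lf_le_H H hH M h2
      apply QuotientGroup.eq.mpr
      apply Lf_subgroupOf_le H hH M
      rw [Subgroup.mem_subgroupOf]
      have key : ((toH H g₁)⁻¹ * toH H g₂ : ↥H) =
          ((toH H g₁ : G)⁻¹ * (toH H g₂ : G) : G) := by push_cast; ring_nf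
      have key2 : (toH H g₁ : G)⁻¹ * (toH H g₂ : G)
          = (cls H g₁).out * (g₁⁻¹ * g₂) * ((cls H g₁).out)⁻¹ := by
        simp only [toH]
        rw [← hcls]
        group
      show (((toH H g₁)⁻¹ * toH H g₂ : ↥H) : G) ∈ (Lf H hH M).1
      rw [key, key2]
      exact Subgroup.Normal.conj_mem inferInstance _ hg' _)

theorem psiAux_mk (M : FinIndexNormal ↥H) (g : G) :
    psiAux H hH M (QuotientGroup.mk g) = QuotientGroup.mk (toH H g) := rfl

theorem thetaF_surjective :
    Function.Surjective (fun p : Qr H × ProfComp ↥H => thetaF H hH p.1 p.2) := by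
  intro z
  set y : Qr H := Quotient.mk _ (Quotient.out (z.1 (Cfin H hH))) with hy
  have compat : (fun M => psiAux H hH M (z.1 (Lf H hH M))) ∈ profCompSubgroup ↥H := by
    intro M₁ M₂ hle
    obtain ⟨g, hg⟩ := ProfCompPf.eq_mk (z.1 (Lf H hH M₁))
    have hg2 : z.1 (Lf H hH M₂) = QuotientGroup.mk g := by
      rw [← z.2 _ _ (Lf_mono H hH hle), hg]
      rfl
    simp only [hg, hg2, psiAux_mk]
    rfl
  refine ⟨(y, ⟨_, compat⟩), ?_⟩
  apply Subtype.ext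
  funext N
  obtain ⟨g, hg⟩ := ProfCompPf.eq_mk (z.1 (Lf H hH (KHf H hH N)))
  have hle1 : (Lf H hH (KHf H hH N)).1 ≤ N.1 := by
    refine le_trans inf_le_left (le_trans (Subgroup.normalCore_le _) ?_)
    rw [show (KHf H hH N).1.map H.subtype = (Kf H hH N).1 ⊓ H from
      Subgroup.subgroupOf_map_subtype _ _]
    exact le_trans inf_le_left inf_le_left
  have hcy : y = cls H g := by
    have hzC : z.1 (Cfin H hH) = QuotientGroup.mk g := by
      rw [← z.2 _ _ (Lf_le_core H hH (KHf H hH N)), hg]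
      rfl
    have h3 : (Quotient.out (z.1 (Cfin H hH)))⁻¹ * g ∈ H.normalCore := by
      apply QuotientGroup.eq.mp
      exact (QuotientGroup.out_eq' _).trans hzC
    have h4 : g * (Quotient.out (z.1 (Cfin H hH)))⁻¹ ∈ H := by
      have h5 : (Quotient.out (z.1 (Cfin H hH))) *
          ((Quotient.out (z.1 (Cfin H hH)))⁻¹ * g) *
          (Quotient.out (z.1 (Cfin H hH)))⁻¹ ∈ H.normalCore :=
        Subgroup.Normal.conj_mem inferInstance _ h3 _
      rw [show (Quotient.out (z.1 (Cfin H hH))) *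
          ((Quotient.out (z.1 (Cfin H hH)))⁻¹ * g) *
          (Quotient.out (z.1 (Cfin H hH)))⁻¹ = g * (Quotient.out (z.1 (Cfin H hH)))⁻¹
          by group] at h5
      exact H.normalCore_le h5
    exact Quotient.sound (QuotientGroup.rightRel_apply.mpr h4)
  have hx : (⟨_, compat⟩ : ProfComp ↥H).1 (KHf H hH N) = QuotientGroup.mk (toH H g) := by
    show psiAux H hH (KHf H hH N) (z.1 (Lf H hH (KHf H hH N))) = _
    rw [hg, psiAux_mk]
  show thetaAux H hH y ⟨_, compat⟩ N = z.1 N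
  rw [thetaAux_mk H hH y _ N (toH H g) hx]
  have hzN : z.1 N = QuotientGroup.mk g := by
    rw [← z.2 _ _ hle1, hg]
    rfl
  rw [hzN, hcy, toH_spec]


theorem thetaF_continuous {ι : Type*} [TopologicalSpace ι] [DiscreteTopology ι]
    (e : ι → Qr H) :
    Continuous (fun p : ι × ProfComp ↥H => thetaF H hH (e p.1) p.2) := by
  apply Continuous.subtype_mk
  apply continuous_pi
  intro N
  exact Continuous.comp
    (continuous_of_discreteTopology
      (f := fun q : ι × (↥H ⧸ (KHf H hH N).1) => thetaCore H hH (e q.1) N q.2))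
    (Continuous.prodMk continuous_fst
      ((continuous_apply _).comp (continuous_subtype_val.comp continuous_snd)))

end ProfCompPf

/-- Let `G` be a residually finite group and `H` a subgroup of finite index. Then there is
a finite set `Y` and an `H`-equivariant homeomorphism `Y × H̄ → Ḡ`, where `H` acts
trivially on `Y` and by left translation on both profinite completions. -/
theorem profComp_finiteIndex_product (G : Type*) [Group G] (hG : ResiduallyFinite G)
    (H : Subgroup G) (hH : H.index ≠ 0) :
    ∃ (Y : Type) (_ : Fintype Y) (_ : TopologicalSpace Y) (_ : DiscreteTopology Y)
      (θ : Y × ProfComp ↥H ≃ₜ ProfComp G),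
      ∀ (h : ↥H) (y : Y) (x : ProfComp ↥H),
        θ (y, iotaHom ↥H h * x) = iotaHom G (h : G) * θ (y, x) := by
  classical
  haveI hfin : Finite (G ⧸ H) := Nat.finite_of_card_ne_zero (by
    rw [← H.index_eq_card]; exact hH)
  haveI : Finite (ProfCompPf.Qr H) :=
    Finite.of_equiv _ (QuotientGroup.quotientRightRelEquivQuotientLeftRel H).symm
  haveI : Fintype (ProfCompPf.Qr H) := Fintype.ofFinite _
  let n := Fintype.card (ProfCompPf.Qr H)
  let e : Fin n ≃ ProfCompPf.Qr H := (Fintype.equivFin (ProfCompPf.Qr H)).symm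
  letI : TopologicalSpace (Fin n) := ⊥
  haveI : DiscreteTopology (Fin n) := ⟨rfl⟩
  have hbij : Function.Bijective (fun p : Fin n × ProfComp ↥H =>
      ProfCompPf.thetaF H hH (e p.1) p.2) := by
    have h1 : Function.Bijective (fun p : ProfCompPf.Qr H × ProfComp ↥H =>
        ProfCompPf.thetaF H hH p.1 p.2) :=
      ⟨ProfCompPf.thetaF_injective H hH, ProfCompPf.thetaF_surjective H hH⟩
    exact h1.comp (Equiv.prodCongr e (Equiv.refl _)).bijective
  let E : Fin n × ProfComp ↥H ≃ ProfComp G := Equiv.ofBijective _ hbij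
  have hcont0 : Continuous (fun p : Fin n × ProfComp ↥H =>
      ProfCompPf.thetaF H hH (e p.1) p.2) := ProfCompPf.thetaF_continuous H hH e
  have hcont : Continuous E := hcont0
  refine ⟨Fin n, inferInstance, ⊥, ⟨rfl⟩,
    Continuous.homeoOfEquivCompactToT2 (f := E) hcont, ?_⟩
  intro h y x
  show E (y, iotaHom ↥H h * x) = iotaHom G (h : G) * E (y, x)
  exact ProfCompPf.thetaF_equivariant H hH h (e y) x
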